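/- For a permutation w ∈ S_n of cycle type λ = (λ_1, ..., λ_k), the rational function ∏_{i=1}^{n}(1 − q^i) / ∏_{i=1}^{k}(1 − q^{λ_i}) is a polynomial in q with integer coefficients. -/

import Mathlib

open Polynomial Finset

lemma aux_dvd_prod (s : Multiset ℕ) :
    ∀ n : ℕ, (∀ d ∈ s, 0 < d) → s.sum ≤ n →
      (s.map fun d => 1 - (X : Polynomial ℤ) ^ d).prod ∣
        ∏ i ∈ Finset.range n, (1 - (X : Polynomial ℤ) ^ (i + 1)) := by
  induction s using Multiset.induction with
  | empty => intro n _ _; simp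
  | cons d t ih =>
    intro n hpos hsum
    simp only [Multiset.map_cons, Multiset.prod_cons, Multiset.sum_cons] at *
    have hd : 0 < d := hpos d (Multiset.mem_cons_self d t)
    have hdn : d ≤ n := le_trans (Nat.le_add_right d t.sum) hsum
    have ht : t.sum ≤ n - d := by omega
    have h1 : (t.map fun d => 1 - (X : Polynomial ℤ) ^ d).prod ∣
        ∏ i ∈ Finset.range (n - d), (1 - (X : Polynomial ℤ) ^ (i + 1)) :=
      ih (n - d) (fun e he => hpos e (Multiset.mem_cons_of_mem he)) ht
    -- the multiple of d in (n-d, n]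
    set j := n / d with hj
    have hj1 : 1 ≤ j := (Nat.one_le_div_iff hd).2 hdn
    have hjd_le : j * d ≤ n := Nat.div_mul_le_self n d
    have hjd_gt : n - d < j * d := by
      have hdm := Nat.div_add_mod n d
      have hmod := Nat.mod_lt n hd
      have : j * d = d * (n / d) := by rw [hj, Nat.mul_comm]
      omega
    have hmem : j * d - 1 ∈ Finset.Ico (n - d) n := by
      simp only [Finset.mem_Ico]; omega
    have h2 : (1 - (X : Polynomial ℤ) ^ d) ∣
        ∏ i ∈ Finset.Ico (n - d) n, (1 - (X : Polynomial ℤ) ^ (i + 1)) := by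
      refine dvd_trans ?_ (Finset.dvd_prod_of_mem _ hmem)
      have heq : (j * d - 1) + 1 = j * d := by omega
      rw [heq, Nat.mul_comm, pow_mul]
      have := sub_dvd_pow_sub_pow (1 : Polynomial ℤ) (X ^ d) j
      simpa using this
    have hsplit : ∏ i ∈ Finset.range n, (1 - (X : Polynomial ℤ) ^ (i + 1)) =
        (∏ i ∈ Finset.range (n - d), (1 - (X : Polynomial ℤ) ^ (i + 1))) *
        (∏ i ∈ Finset.Ico (n - d) n, (1 - (X : Polynomial ℤ) ^ (i + 1))) := by
      rw [Finset.range_eq_Ico, ← Finset.prod_Ico_consecutive _ (Nat.zero_le (n - d)) (Nat.sub_le n d)]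
      rw [Finset.range_eq_Ico]
    rw [hsplit, mul_comm (1 - (X : Polynomial ℤ) ^ d)]
    exact mul_dvd_mul h1 h2

/-- For a permutation of cycle type the partition `λ = (λ_1, …, λ_k)` of `n`, the
rational function `∏_{i=1}^{n}(1 − q^i) / ∏_{i=1}^{k}(1 − q^{λ_i})` is a polynomial
with integer coefficients: the denominator divides the numerator in `ℤ[q]`. -/
theorem graded_character_is_polynomial (n : ℕ) (lam : Nat.Partition n) :
    ∃ f : Polynomial ℤ,
      ∏ i ∈ Finset.range n, (1 - (X : Polynomial ℤ) ^ (i + 1)) =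
      (lam.parts.map fun d => 1 - (X : Polynomial ℤ) ^ d).prod * f := by
  have h := aux_dvd_prod lam.parts n (fun d hd => lam.parts_pos hd) (le_of_eq lam.parts_sum)
  exact h
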